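/- Let K ≥ 4 be a multiple of 4 and M ≥ 2. For every ν > 0, E_{K,M}(ν) ≥ − 2·(1 + cot(2π/K))·(KM)^{−ν/(2(1+cot(2π/K))²)} / √(2π·ν·ln(KM)). -/

import Mathlib

open MeasureTheory ProbabilityTheory Finset

noncomputable section

/-- The `k`-th symbol of the K-PSK constellation, `π_k = exp(i·2πk/K)`. -/
def psk (K k : ℕ) : ℂ := Complex.exp (2 * (Real.pi : ℂ) * Complex.I * (k : ℂ) / (K : ℂ))

/-- Law of `(U₁, (U₂,…,U_M))` where `U_j = U_j^R + i·U_j^I` with all real/imaginary parts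
i.i.d. standard Gaussian `N(0,1)` (so each `U_j ~ CN(0,2)`): the first factor carries the
real and imaginary parts of `U₁`, the second the real and imaginary parts of `U₂,…,U_M`. -/
def seMeasure (M : ℕ) :
    Measure ((ℝ × ℝ) × ((Fin (M - 1) → ℝ) × (Fin (M - 1) → ℝ))) :=
  ((gaussianReal 0 1).prod (gaussianReal 0 1)).prod
    ((Measure.pi fun _ => gaussianReal 0 1).prod (Measure.pi fun _ => gaussianReal 0 1))

/-- The state-evolution functional `E_{K,M}(ν) = E[N/D]`, with `μ = ν·ln(KM)`,
`N = ∑_{k=1}^K Re(π_k)·exp(μ Re(π_k) + √μ Re(U₁ conj(π_k)))` and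
`D = ∑_{a=1}^K exp(μ Re(π_a) + √μ Re(U₁ conj(π_a)))
   + ∑_{j=2}^M ∑_{b=1}^K exp(√μ Re(U_j conj(π_b)))`,
where `U₁,…,U_M` are i.i.d. `CN(0,2)`. -/
def EKM (K M : ℕ) (ν : ℝ) : ℝ :=
  ∫ u, (∑ k ∈ Finset.Icc 1 K, (psk K k).re *
          Real.exp (ν * Real.log ((K : ℝ) * M) * (psk K k).re +
            Real.sqrt (ν * Real.log ((K : ℝ) * M)) *
              (((u.1.1 : ℂ) + (u.1.2 : ℂ) * Complex.I) * (starRingEnd ℂ) (psk K k)).re)) /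
       ((∑ a ∈ Finset.Icc 1 K,
          Real.exp (ν * Real.log ((K : ℝ) * M) * (psk K a).re +
            Real.sqrt (ν * Real.log ((K : ℝ) * M)) *
              (((u.1.1 : ℂ) + (u.1.2 : ℂ) * Complex.I) * (starRingEnd ℂ) (psk K a)).re)) +
        ∑ j : Fin (M - 1), ∑ b ∈ Finset.Icc 1 K,
          Real.exp (Real.sqrt (ν * Real.log ((K : ℝ) * M)) *
            (((u.2.1 j : ℂ) + (u.2.2 j : ℂ) * Complex.I) * (starRingEnd ℂ) (psk K b)).re))
    ∂(seMeasure M)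


section Aux
open Real Filter Topology
open scoped ENNReal NNReal

lemma abs_cos_sin_nat_pi_add (q : ℕ) (x : ℝ) :
    |Real.cos (q * π + x)| = |Real.cos x| ∧ |Real.sin (q * π + x)| = |Real.sin x| := by
  induction q with
  | zero => simp
  | succ n ih =>
    have h1 : ((n + 1 : ℕ) : ℝ) * π + x = (↑n * π + x) + π := by push_cast; ring
    rw [h1, Real.cos_add_pi, Real.sin_add_pi, abs_neg, abs_neg]
    exact ih

lemma trig_core (m : ℕ) (hm : 0 < m) (k : ℕ) :
    Real.cos (π * k / (2 * m)) = 0 ∨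
      Real.sin (π / (2 * m)) * |Real.sin (π * k / (2 * m))| ≤
        Real.cos (π / (2 * m)) * |Real.cos (π * k / (2 * m))| := by
  have hm' : (0:ℝ) < 2 * (m:ℝ) := by positivity
  have hπ := Real.pi_pos
  set n := 2 * m with hn
  have hnR : ((n:ℕ):ℝ) = 2 * (m:ℝ) := by push_cast [hn]; ring
  have hk : n * (k / n) + k % n = k := Nat.div_add_mod k n
  have hrlt : k % n < n := Nat.mod_lt _ (by omega)
  set q := k / n
  set r := k % n
  have hang : π * (k:ℝ) / (2 * m) = (q:ℝ) * π + π * (r:ℝ) / (2 * m) := by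
    rw [← hk]; push_cast [hn]; field_simp
  have habs := abs_cos_sin_nat_pi_add q (π * (r:ℝ) / (2 * m))
  rw [hang, habs.1, habs.2]
  rcases lt_trichotomy r m with hr | hr | hr
  · -- r < m
    right
    have hx0 : 0 ≤ π * (r:ℝ) / (2 * m) := by positivity
    have hrm : (r:ℝ) + 1 ≤ (m:ℝ) := by exact_mod_cast hr
    have ha0 : 0 ≤ π / (2 * (m:ℝ)) := by positivity
    have hxa : π * (r:ℝ) / (2 * m) + π / (2 * m) ≤ π / 2 := by
      rw [← add_div, div_le_iff₀ hm']
      nlinarith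
    have hx2 : π * (r:ℝ) / (2 * m) ≤ π / 2 := by linarith
    have hsx : 0 ≤ Real.sin (π * (r:ℝ) / (2 * m)) := by
      apply Real.sin_nonneg_of_nonneg_of_le_pi hx0
      linarith
    have hcx : 0 ≤ Real.cos (π * (r:ℝ) / (2 * m)) := by
      apply Real.cos_nonneg_of_mem_Icc
      constructor <;> linarith
    have hca : 0 ≤ Real.cos (π * (r:ℝ) / (2 * m) + π / (2 * m)) := by
      apply Real.cos_nonneg_of_mem_Icc
      constructor <;> linarith
    rw [Real.cos_add] at hca
    rw [abs_of_nonneg hsx, abs_of_nonneg hcx]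
    linarith
  · -- r = m
    left
    have : π * (r:ℝ) / (2 * m) = π / 2 := by
      rw [hr]; field_simp
    refine abs_eq_zero.mp ?_
    rw [habs.1, this, Real.cos_pi_div_two, abs_zero]
  · -- m < r
    right
    have hrn : (r:ℝ) ≤ 2 * (m:ℝ) := by
      have : r ≤ n := le_of_lt hrlt
      exact_mod_cast hnR ▸ (by exact_mod_cast this : ((r:ℕ):ℝ) ≤ ((n:ℕ):ℝ))
    have hmr : (m:ℝ) + 1 ≤ (r:ℝ) := by exact_mod_cast hr
    have hxpi : π * (r:ℝ) / (2 * m) ≤ π := by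
      rw [div_le_iff₀ hm']; nlinarith
    have hx2 : π / 2 ≤ π * (r:ℝ) / (2 * m) := by
      rw [le_div_iff₀ hm']; nlinarith
    have hsx : 0 ≤ Real.sin (π * (r:ℝ) / (2 * m)) :=
      Real.sin_nonneg_of_nonneg_of_le_pi (by positivity) hxpi
    have hcx : Real.cos (π * (r:ℝ) / (2 * m)) ≤ 0 := by
      apply Real.cos_nonpos_of_pi_div_two_le_of_le hx2
      linarith
    have hsub : Real.cos (π * (r:ℝ) / (2 * m) - π / (2 * m)) ≤ 0 := by
      apply Real.cos_nonpos_of_pi_div_two_le_of_le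
      · rw [div_sub_div_same, le_div_iff₀ hm']; nlinarith
      · rw [div_sub_div_same, div_le_iff₀ hm']; nlinarith
    rw [Real.cos_sub] at hsub
    rw [abs_of_nonneg hsx, abs_of_nonpos hcx]
    linarith

lemma psk_eq (K k : ℕ) : psk K k = Complex.exp (((2 * π * k / K : ℝ) : ℂ) * Complex.I) := by
  unfold psk; congr 1; push_cast; ring

lemma psk_re (K k : ℕ) : (psk K k).re = Real.cos (2 * π * k / K) := by
  rw [psk_eq, Complex.exp_ofReal_mul_I_re]

lemma psk_im (K k : ℕ) : (psk K k).im = Real.sin (2 * π * k / K) := by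
  rw [psk_eq, Complex.exp_ofReal_mul_I_im]

lemma psk_abs (K k : ℕ) : ‖psk K k‖ = 1 := by
  rw [psk_eq, Complex.norm_exp]
  simp

/-- the pairing involution -/
def pairmap (m k : ℕ) : ℕ := if k ≤ 2 * m then k + 2 * m else k - 2 * m

lemma pairmap_mem (m k : ℕ) (hm : 0 < m) (hk : k ∈ Finset.Icc 1 (4 * m)) :
    pairmap m k ∈ Finset.Icc 1 (4 * m) := by
  simp only [Finset.mem_Icc] at *
  unfold pairmap; split <;> omega

lemma pairmap_pairmap (m k : ℕ) (hk : k ∈ Finset.Icc 1 (4 * m)) :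
    pairmap m (pairmap m k) = k := by
  simp only [Finset.mem_Icc] at hk
  unfold pairmap; split <;> split <;> omega

lemma psk_pairmap (m k : ℕ) (hm : 0 < m) (hk : k ∈ Finset.Icc 1 (4 * m)) :
    psk (4 * m) (pairmap m k) = -psk (4 * m) k := by
  simp only [Finset.mem_Icc] at hk
  have hm' : ((4 * m : ℕ) : ℂ) ≠ 0 := by
    push_cast
    simp only [ne_eq, mul_eq_zero]
    push_neg
    exact ⟨by norm_num, Nat.cast_ne_zero.mpr (by omega)⟩
  have hmC : (m:ℂ) ≠ 0 := Nat.cast_ne_zero.mpr (by omega)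
  have h4 : ((4 * m : ℕ) : ℂ) = 4 * (m:ℂ) := by push_cast; ring
  unfold pairmap
  split
  · have : ((k + 2 * m : ℕ) : ℂ) = (k : ℂ) + 2 * m := by push_cast; ring
    unfold psk
    rw [this]
    have harg : 2 * (π : ℂ) * Complex.I * ((k : ℂ) + 2 * m) / ((4 * m : ℕ) : ℂ) =
        2 * (π : ℂ) * Complex.I * (k : ℂ) / ((4 * m : ℕ) : ℂ) + π * Complex.I := by
      rw [h4]
      field_simp
      ring
    rw [harg, Complex.exp_add, Complex.exp_pi_mul_I]
    ring
  · have hk2 : 2 * m < k := by omega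
    have : ((k - 2 * m : ℕ) : ℂ) = (k : ℂ) - 2 * m := by
      push_cast [Nat.cast_sub hk2.le]
      ring
    unfold psk
    rw [this]
    have harg : 2 * (π : ℂ) * Complex.I * ((k : ℂ) - 2 * m) / ((4 * m : ℕ) : ℂ) =
        2 * (π : ℂ) * Complex.I * (k : ℂ) / ((4 * m : ℕ) : ℂ) + (-(π * Complex.I)) := by
      rw [h4]
      field_simp
      ring
    rw [harg, Complex.exp_add, Complex.exp_neg, Complex.exp_pi_mul_I]
    norm_num

lemma sign_lemma (c w : ℝ) (h : 0 ≤ c * w) : 0 ≤ c * (Real.exp w - Real.exp (-w)) := by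
  rcases lt_trichotomy w 0 with hw | hw | hw
  · have hc : c ≤ 0 := by nlinarith
    have hle : Real.exp w ≤ Real.exp (-w) := Real.exp_le_exp.mpr (by linarith)
    nlinarith
  · simp [hw]
  · have hc : 0 ≤ c := by nlinarith
    have : 0 ≤ Real.exp w - Real.exp (-w) := by
      have := Real.exp_le_exp.mpr (show -w ≤ w by linarith)
      linarith
    exact mul_nonneg hc this

lemma numer_nonneg (m : ℕ) (hm : 0 < m) (μ u x y : ℝ) (hμ : μ = u * u) (hu : 0 ≤ u)
    (hgood : -u ≤ x - Real.cot (2 * π / (4 * m)) * |y|) :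
    0 ≤ ∑ k ∈ Finset.Icc 1 (4 * m), (psk (4 * m) k).re *
        Real.exp (μ * (psk (4 * m) k).re + u * (x * (psk (4 * m) k).re + y * (psk (4 * m) k).im)) := by
  have hmR : (0:ℝ) < (m:ℝ) := by exact_mod_cast hm
  have hm1 : (1:ℝ) ≤ (m:ℝ) := by exact_mod_cast hm
  have hπ := Real.pi_pos
  set t : ℝ := Real.cot (2 * π / (4 * m)) with ht
  have hang0 : 2 * π / (4 * (m:ℝ)) = π / (2 * m) := by field_simp; ring
  have hsa : 0 < Real.sin (π / (2 * (m:ℝ))) := by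
    apply Real.sin_pos_of_pos_of_lt_pi
    · positivity
    · rw [div_lt_iff₀ (by positivity)]
      nlinarith [hm1]
  have hca : 0 ≤ Real.cos (π / (2 * (m:ℝ))) := by
    apply Real.cos_nonneg_of_mem_Icc
    constructor
    · nlinarith [div_nonneg hπ.le (by positivity : (0:ℝ) ≤ 2 * (m:ℝ))]
    · rw [div_le_div_iff₀ (by positivity) (by norm_num)]
      nlinarith [hm1]
  have htc : t = Real.cos (π / (2 * m)) / Real.sin (π / (2 * m)) := by
    rw [ht, hang0, Real.cot_eq_cos_div_sin]
  have htpos : 0 ≤ t := by rw [htc]; positivity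
  set g : ℕ → ℝ := fun k => (psk (4 * m) k).re *
      Real.exp (μ * (psk (4 * m) k).re + u * (x * (psk (4 * m) k).re + y * (psk (4 * m) k).im))
    with hg
  have hswap : ∑ k ∈ Finset.Icc 1 (4 * m), g k
      = ∑ k ∈ Finset.Icc 1 (4 * m), g (pairmap m k) := by
    refine Finset.sum_nbij' (pairmap m) (pairmap m) ?_ ?_ ?_ ?_ ?_
    · exact fun a ha => pairmap_mem m a hm ha
    · exact fun a ha => pairmap_mem m a hm ha
    · exact fun a ha => pairmap_pairmap m a ha
    · exact fun a ha => pairmap_pairmap m a ha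
    · intro a ha
      rw [pairmap_pairmap m a ha]
  have key : ∀ k ∈ Finset.Icc 1 (4 * m), 0 ≤ g k + g (pairmap m k) := by
    intro k hk
    have hpsk := psk_pairmap m k hm hk
    set c : ℝ := (psk (4 * m) k).re with hc
    set s' : ℝ := (psk (4 * m) k).im with hs'
    have hre : (psk (4 * m) (pairmap m k)).re = -c := by rw [hpsk, Complex.neg_re]
    have him : (psk (4 * m) (pairmap m k)).im = -s' := by rw [hpsk, Complex.neg_im]
    have hgk : g k + g (pairmap m k)
        = c * (Real.exp (μ * c + u * (x * c + y * s')) - Real.exp (-(μ * c + u * (x * c + y * s')))) := by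
      simp only [hg, hre, him]
      have hB : μ * (-c) + u * (x * (-c) + y * (-s')) = -(μ * c + u * (x * c + y * s')) := by ring
      rw [hB]
      ring
    rw [hgk]
    apply sign_lemma
    -- trig bound
    have hang : 2 * π * (k:ℝ) / ((4 * m : ℕ):ℝ) = π * k / (2 * m) := by
      push_cast; field_simp; ring
    have hcc : c = Real.cos (π * k / (2 * m)) := by rw [hc, psk_re, hang]
    have hss : s' = Real.sin (π * k / (2 * m)) := by rw [hs', psk_im, hang]
    have htrig : |s'| * |c| ≤ t * c ^ 2 ∨ c = 0 := by
      rcases trig_core m hm k with h0 | hle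
      · right; rw [hcc, h0]
      · left
        rw [hcc, hss, htc]
        rw [div_mul_eq_mul_div, le_div_iff₀ hsa]
        calc |Real.sin (π * (k:ℝ) / (2 * m))| * |Real.cos (π * (k:ℝ) / (2 * m))| * Real.sin (π / (2 * m))
            = (Real.sin (π / (2 * m)) * |Real.sin (π * (k:ℝ) / (2 * m))|) * |Real.cos (π * (k:ℝ) / (2 * m))| := by
              ring
          _ ≤ (Real.cos (π / (2 * m)) * |Real.cos (π * (k:ℝ) / (2 * m))|) * |Real.cos (π * (k:ℝ) / (2 * m))| := by
              exact mul_le_mul_of_nonneg_right hle (abs_nonneg _)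
          _ = Real.cos (π / (2 * m)) * Real.cos (π * (k:ℝ) / (2 * m)) ^ 2 := by
              rw [mul_assoc, ← abs_mul, ← sq, abs_sq]
    rcases htrig with htrig | hc0
    · -- main case
      have f1 : -(|y| * (|s'| * |c|)) ≤ y * (c * s') := by
        have : |y * (c * s')| = |y| * (|s'| * |c|) := by
          rw [abs_mul, abs_mul]; ring
        rw [← this]
        exact neg_abs_le _
      have f2 : |y| * (|s'| * |c|) ≤ |y| * (t * c ^ 2) :=
        mul_le_mul_of_nonneg_left htrig (abs_nonneg y)
      have f3 : -( |y| * (t * c ^ 2)) ≤ y * (c * s') := by linarith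
      have f4 : 0 ≤ u * c ^ 2 * (x - t * |y| + u) :=
        mul_nonneg (mul_nonneg hu (sq_nonneg c)) (by linarith)
      have f5 : u * (-( |y| * (t * c ^ 2))) ≤ u * (y * (c * s')) :=
        mul_le_mul_of_nonneg_left f3 hu
      nlinarith [sq_nonneg c, sq_nonneg u]
    · rw [hc0]; ring_nf; simp
  calc (0:ℝ) ≤ (∑ k ∈ Finset.Icc 1 (4 * m), (g k + g (pairmap m k))) / 2 := by
        apply div_nonneg _ (by norm_num)
        exact Finset.sum_nonneg key
    _ = ∑ k ∈ Finset.Icc 1 (4 * m), g k := by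
        rw [Finset.sum_add_distrib, ← hswap]
        ring

def phiR (x : ℝ) : ℝ := (Real.sqrt (2 * π))⁻¹ * Real.exp (-x ^ 2 / 2)

lemma phiR_nonneg (x : ℝ) : 0 ≤ phiR x := by unfold phiR; positivity

lemma phiR_even (x : ℝ) : phiR (-x) = phiR x := by unfold phiR; rw [neg_sq]

lemma continuous_phiR : Continuous phiR := by
  unfold phiR; fun_prop

lemma gaussianPDFReal_eq_phiR : gaussianPDFReal 0 1 = phiR := by
  ext x
  simp only [gaussianPDFReal, phiR, NNReal.coe_one, mul_one, sub_zero]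

lemma hasDerivAt_neg_phiR (y : ℝ) : HasDerivAt (fun z => -phiR z) (phiR y * y) y := by
  have h1 : HasDerivAt (fun z : ℝ => -z ^ 2 / 2) (-y) y := by
    have h := ((hasDerivAt_pow 2 y).neg.div_const 2)
    refine h.congr_deriv ?_
    simp
    ring
  have h2 := ((h1.exp.const_mul (Real.sqrt (2 * π))⁻¹)).neg
  refine h2.congr_deriv ?_
  unfold phiR
  ring

lemma integrable_mul_phiR : Integrable (fun x => x * phiR x) := by
  have h := (integrable_mul_exp_neg_mul_sq (by norm_num : (0:ℝ) < 1/2)).const_mul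
    (Real.sqrt (2 * π))⁻¹
  refine h.congr (Filter.Eventually.of_forall fun x => ?_)
  beta_reduce
  unfold phiR
  rw [show -x ^ 2 / 2 = -(1/2) * x ^ 2 by ring]
  ring

lemma integrable_abs_mul_phiR : Integrable (fun x => |x| * phiR x) := by
  refine integrable_mul_phiR.abs.congr (Filter.Eventually.of_forall fun x => ?_)
  beta_reduce
  rw [abs_mul, abs_of_nonneg (phiR_nonneg x)]

lemma integrable_phiR : Integrable phiR := by
  rw [← gaussianPDFReal_eq_phiR]; exact integrable_gaussianPDFReal 0 1

lemma tendsto_neg_phiR_atTop : Tendsto (fun z => -phiR z) atTop (𝓝 0) := by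
  have hsq : Tendsto (fun z : ℝ => z ^ 2 / 2) atTop atTop :=
    (tendsto_pow_atTop (by norm_num : (2:ℕ) ≠ 0)).atTop_div_const (by norm_num)
  have hexp : Tendsto (fun z : ℝ => Real.exp (-(z ^ 2 / 2))) atTop (𝓝 0) :=
    Real.tendsto_exp_neg_atTop_nhds_zero.comp hsq
  have h2 : Tendsto (fun z : ℝ => -((Real.sqrt (2 * π))⁻¹ * Real.exp (-(z ^ 2 / 2)))) atTop
      (𝓝 (-((Real.sqrt (2 * π))⁻¹ * 0))) := ((hexp.const_mul _)).neg
  simp only [mul_zero, neg_zero] at h2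
  refine h2.congr fun z => ?_
  unfold phiR
  rw [show -z ^ 2 / 2 = -(z ^ 2 / 2) by ring]

lemma stein_Ioi (c : ℝ) : ∫ y in Set.Ioi c, phiR y * y = phiR c := by
  have h := integral_Ioi_of_hasDerivAt_of_tendsto'
    (f := fun z => -phiR z) (f' := fun y => phiR y * y) (a := c) (m := 0)
    (fun y _ => hasDerivAt_neg_phiR y)
    ((integrable_mul_phiR.congr (Filter.Eventually.of_forall fun x => by ring)).integrableOn)
    tendsto_neg_phiR_atTop
  rw [h]; ring

lemma stein_Iio (b : ℝ) : ∫ x in Set.Iio b, phiR x * (-x) = phiR b := by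
  have h1 : ∫ x in Set.Iio b, phiR x * (-x) = ∫ x in Set.Iic b, phiR x * (-x) := by
    apply setIntegral_congr_set
    exact (Iio_ae_eq_Iic (μ := volume) (a := b))
  have h2 := integral_comp_neg_Ioi (-b) (fun x => phiR x * (-x))
  rw [neg_neg] at h2
  have h3 : (∫ x in Set.Ioi (-b), phiR (-x) * (- -x)) = ∫ x in Set.Ioi (-b), phiR x * x := by
    apply setIntegral_congr_fun measurableSet_Ioi
    intro x _
    beta_reduce
    rw [phiR_even, neg_neg]
  rw [h1, ← h2, h3, stein_Ioi, phiR_even]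

lemma gauss_conv (α β : ℝ) : ∫ x : ℝ, phiR (α * x + β) * phiR x
    = (Real.sqrt (2 * π))⁻¹ * (Real.sqrt (1 + α ^ 2))⁻¹
      * Real.exp (-(β ^ 2 / (2 * (1 + α ^ 2)))) := by
  have hπ := Real.pi_pos
  have hs : (0:ℝ) < 1 + α ^ 2 := by positivity
  have hstep : (fun x : ℝ => phiR (α * x + β) * phiR x)
      = fun x => ((Real.sqrt (2 * π))⁻¹ * (Real.sqrt (2 * π))⁻¹
          * Real.exp (-(β ^ 2 / (2 * (1 + α ^ 2)))))
        * Real.exp (-((1 + α ^ 2) / 2) * (x + α * β / (1 + α ^ 2)) ^ 2) := by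
    funext x
    unfold phiR
    have hexp : -(α * x + β) ^ 2 / 2 + -x ^ 2 / 2
        = -(β ^ 2 / (2 * (1 + α ^ 2))) + -((1 + α ^ 2) / 2) * (x + α * β / (1 + α ^ 2)) ^ 2 := by
      field_simp
      ring
    rw [mul_mul_mul_comm, ← Real.exp_add, hexp, Real.exp_add]
    ring
  rw [hstep, integral_const_mul]
  have hshift := integral_add_right_eq_self (μ := volume)
    (fun x : ℝ => Real.exp (-((1 + α ^ 2) / 2) * x ^ 2)) (α * β / (1 + α ^ 2))
  rw [hshift, integral_gaussian]
  have h1 : π / ((1 + α ^ 2) / 2) = 2 * π / (1 + α ^ 2) := by field_simp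
  rw [h1, Real.sqrt_div (by positivity : (0:ℝ) ≤ 2 * π)]
  have hc : Real.sqrt (2 * π) ≠ 0 := by positivity
  have hd : Real.sqrt (1 + α ^ 2) ≠ 0 := by positivity
  field_simp

lemma measurable_phiR : Measurable phiR := continuous_phiR.measurable

lemma gaussianReal_eq_withDensity :
    gaussianReal 0 1 = volume.withDensity (fun x => ENNReal.ofReal (phiR x)) := by
  rw [gaussianReal_of_var_ne_zero 0 one_ne_zero]
  congr 1
  funext x
  rw [gaussianPDF_def]
  rw [gaussianPDFReal_eq_phiR]

lemma setIntegral_gauss (g : ℝ → ℝ) {s : Set ℝ} (hs : MeasurableSet s) :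
    ∫ x in s, g x ∂(gaussianReal 0 1) = ∫ x in s, phiR x * g x := by
  rw [gaussianReal_eq_withDensity]
  have hcoe : (fun x => ENNReal.ofReal (phiR x)) = (fun x => ((phiR x).toNNReal : ℝ≥0∞)) := rfl
  rw [hcoe, setIntegral_withDensity_eq_setIntegral_smul
    (measurable_phiR.real_toNNReal) g hs]
  apply setIntegral_congr_fun hs
  intro x _
  simp only [NNReal.smul_def, Real.coe_toNNReal _ (phiR_nonneg x), smul_eq_mul]

lemma integral_gauss (g : ℝ → ℝ) :
    ∫ x, g x ∂(gaussianReal 0 1) = ∫ x, phiR x * g x := by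
  rw [← setIntegral_univ (μ := gaussianReal 0 1), setIntegral_gauss g MeasurableSet.univ,
    setIntegral_univ]

lemma integrable_gauss_iff (g : ℝ → ℝ) (hg : Measurable g) :
    Integrable g (gaussianReal 0 1) ↔ Integrable (fun x => g x * phiR x) volume := by
  rw [gaussianReal_eq_withDensity,
    integrable_withDensity_iff (measurable_phiR.ennreal_ofReal)
      (Filter.Eventually.of_forall fun x => ENNReal.ofReal_lt_top)]
  constructor <;> intro h <;>
    refine h.congr (Filter.Eventually.of_forall fun x => ?_) <;>
    beta_reduce <;>
    rw [ENNReal.toReal_ofReal (phiR_nonneg x)]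

lemma integrable_id_gauss : Integrable (fun x : ℝ => x) (gaussianReal 0 1) :=
  (integrable_gauss_iff (fun x => x) measurable_id).mpr integrable_mul_phiR

lemma integrable_abs_gauss : Integrable (fun x : ℝ => |x|) (gaussianReal 0 1) :=
  (integrable_gauss_iff (fun x => |x|) measurable_abs).mpr integrable_abs_mul_phiR

lemma gauss_int_Iio (b : ℝ) : ∫ x in Set.Iio b, (-x) ∂(gaussianReal 0 1) = phiR b := by
  rw [setIntegral_gauss _ measurableSet_Iio, stein_Iio]

lemma gauss_int_Ioi (c : ℝ) : ∫ y in Set.Ioi c, y ∂(gaussianReal 0 1) = phiR c := by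
  rw [setIntegral_gauss _ measurableSet_Ioi, stein_Ioi]

section Halfplane

local notation "γ" => gaussianReal 0 1

lemma integrable_fst_P : Integrable (fun p : ℝ × ℝ => p.1) (Measure.prod γ γ) := by
  have hmap : (Measure.prod γ γ).map Prod.fst = γ := by
    rw [Measure.map_fst_prod]
    simp
  have h : Integrable (fun x : ℝ => x) ((Measure.prod γ γ).map Prod.fst) := by
    rw [hmap]; exact integrable_id_gauss
  have h2 := (integrable_map_measure (f := Prod.fst) (g := fun x : ℝ => x)
    (by rw [hmap]; exact aestronglyMeasurable_id) measurable_fst.aemeasurable).mp h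
  exact h2

lemma integrable_snd_P : Integrable (fun p : ℝ × ℝ => p.2) (Measure.prod γ γ) := by
  have hmap : (Measure.prod γ γ).map Prod.snd = γ := by
    rw [Measure.map_snd_prod]
    simp
  have h : Integrable (fun x : ℝ => x) ((Measure.prod γ γ).map Prod.snd) := by
    rw [hmap]; exact integrable_id_gauss
  have h2 := (integrable_map_measure (f := Prod.snd) (g := fun x : ℝ => x)
    (by rw [hmap]; exact aestronglyMeasurable_id) measurable_snd.aemeasurable).mp h
  exact h2

lemma halfplane_bound (t u : ℝ) (ht : 0 ≤ t) (hu : 0 < u) :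
    ((Measure.prod γ γ) {p : ℝ × ℝ | p.1 - t * p.2 < -u}).toReal
      ≤ Real.sqrt (1 + t ^ 2) * Real.exp (-(u ^ 2 / (2 * (1 + t ^ 2)))) / (u * Real.sqrt (2 * π)) := by
  have hπ := Real.pi_pos
  set H : Set (ℝ × ℝ) := {p : ℝ × ℝ | p.1 - t * p.2 < -u} with hH
  have hHmeas : MeasurableSet H := by
    have : H = (fun p : ℝ × ℝ => p.1 - t * p.2) ⁻¹' (Set.Iio (-u)) := rfl
    rw [this]
    exact measurableSet_preimage (measurable_fst.sub (measurable_snd.const_mul t))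
      measurableSet_Iio
  -- the two indicator functions
  have hFA : Integrable (H.indicator (fun p : ℝ × ℝ => -p.1)) (Measure.prod γ γ) :=
    integrable_fst_P.neg.indicator hHmeas
  have hFB : Integrable (H.indicator (fun p : ℝ × ℝ => t * p.2)) (Measure.prod γ γ) :=
    (integrable_snd_P.const_mul t).indicator hHmeas
  -- Step 1 : (P H).toReal ≤ (A + B)/u
  have hstep1 : u * ((Measure.prod γ γ) H).toReal
      ≤ (∫ p, H.indicator (fun p : ℝ × ℝ => -p.1) p ∂(Measure.prod γ γ))
          + (∫ p, H.indicator (fun p : ℝ × ℝ => t * p.2) p ∂(Measure.prod γ γ)) := by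
    rw [← measureReal_def, ← integral_indicator_one hHmeas, ← integral_add hFA hFB, ← smul_eq_mul, ← integral_smul]
    apply integral_mono (((integrable_const (1:ℝ)).indicator hHmeas).smul u) (hFA.add hFB)
    intro p
    by_cases hp : p ∈ H
    · simp only [Pi.smul_apply, Set.indicator_of_mem hp, smul_eq_mul, mul_one, Pi.add_apply]
      have hplt : p.1 - t * p.2 < -u := hp
      linarith
    · simp [Set.indicator_of_notMem hp]
  -- evaluate A
  have hA : (∫ p, H.indicator (fun p : ℝ × ℝ => -p.1) p ∂(Measure.prod γ γ))
      = (Real.sqrt (2 * π))⁻¹ * (Real.sqrt (1 + t ^ 2))⁻¹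
          * Real.exp (-(u ^ 2 / (2 * (1 + t ^ 2)))) := by
    rw [integral_prod_symm _ hFA]
    have hinner : ∀ y : ℝ, (∫ x, H.indicator (fun p : ℝ × ℝ => -p.1) (x, y) ∂γ)
        = phiR (t * y - u) := by
      intro y
      have : (fun x => H.indicator (fun p : ℝ × ℝ => -p.1) (x, y))
          = (Set.Iio (t * y - u)).indicator (fun x => -x) := by
        funext x
        by_cases hx : x < t * y - u
        · rw [Set.indicator_of_mem (by exact hx : x ∈ Set.Iio (t * y - u)),
            Set.indicator_of_mem (by simp only [hH, Set.mem_setOf_eq]; linarith : (x, y) ∈ H)]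
        · rw [Set.indicator_of_notMem (by exact hx : x ∉ Set.Iio (t * y - u)),
            Set.indicator_of_notMem (by simp only [hH, Set.mem_setOf_eq]; intro h; exact hx (by linarith) : (x, y) ∉ H)]
      rw [this, integral_indicator measurableSet_Iio, gauss_int_Iio]
    rw [integral_congr_ae (Filter.Eventually.of_forall hinner), integral_gauss]
    have : (fun y => phiR y * phiR (t * y - u)) = fun y => phiR (t * y + (-u)) * phiR y := by
      funext y
      rw [show t * y - u = t * y + (-u) by ring]
      ring
    rw [this, gauss_conv]
    rw [neg_sq]
  have hB : (∫ p, H.indicator (fun p : ℝ × ℝ => t * p.2) p ∂(Measure.prod γ γ))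
      = t ^ 2 * ((Real.sqrt (2 * π))⁻¹ * (Real.sqrt (1 + t ^ 2))⁻¹
          * Real.exp (-(u ^ 2 / (2 * (1 + t ^ 2))))) := by
    rcases eq_or_lt_of_le ht with ht0 | ht0
    · rw [← ht0]
      have hzero : ∀ p : ℝ × ℝ, H.indicator (fun p : ℝ × ℝ => (0:ℝ) * p.2) p = 0 := by
        intro p; simp [Set.indicator]
      rw [integral_congr_ae (Filter.Eventually.of_forall hzero)]
      simp
    · rw [integral_prod _ hFB]
      have hinner : ∀ x : ℝ, (∫ y, H.indicator (fun p : ℝ × ℝ => t * p.2) (x, y) ∂γ)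
          = t * phiR ((x + u) / t) := by
        intro x
        have heq : (fun y => H.indicator (fun p : ℝ × ℝ => t * p.2) (x, y))
            = (Set.Ioi ((x + u) / t)).indicator (fun y => t * y) := by
          funext y
          by_cases hy : (x + u) / t < y
          · have hy2 := hy
            rw [div_lt_iff₀ ht0] at hy2
            have hmem1 : (x, y) ∈ H := by
              simp only [hH, Set.mem_setOf_eq]
              nlinarith
            rw [Set.indicator_of_mem hmem1, Set.indicator_of_mem (Set.mem_Ioi.mpr hy)]
          · have hy' : y ∉ Set.Ioi ((x + u) / t) := by simpa [Set.mem_Ioi] using hy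
            have hmem1 : (x, y) ∉ H := by
              rw [not_lt] at hy
              have hyt := (le_div_iff₀ ht0).mp hy
              simp only [hH, Set.mem_setOf_eq, not_lt]
              nlinarith
            rw [Set.indicator_of_notMem hmem1, Set.indicator_of_notMem hy']
        rw [heq, integral_indicator measurableSet_Ioi, integral_const_mul,
          gauss_int_Ioi]
      rw [integral_congr_ae (Filter.Eventually.of_forall hinner), integral_gauss]
      have heq2 : (fun x => phiR x * (t * phiR ((x + u) / t)))
          = fun x => t * (phiR ((1/t) * x + u/t) * phiR x) := by
        funext x
        rw [show (x + u)/t = (1/t)*x + u/t by field_simp]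
        ring
      rw [heq2, integral_const_mul, gauss_conv]
      have h1 : 1 + (1/t)^2 = (1 + t^2)/t^2 := by field_simp; ring
      have hsq2 : Real.sqrt (1 + (1/t)^2) = Real.sqrt (1 + t^2) / t := by
        rw [h1, Real.sqrt_div (by positivity), Real.sqrt_sq ht0.le]
      have hexp2 : (u/t)^2 / (2 * (1 + (1/t)^2)) = u^2 / (2 * (1 + t^2)) := by
        rw [h1]; field_simp; try ring
      rw [hsq2, hexp2]
      have hsne : Real.sqrt (1 + t^2) ≠ 0 := by positivity
      field_simp
  rw [hA, hB] at hstep1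
  have hsPos : (0:ℝ) < 1 + t^2 := by positivity
  have h2 : Real.sqrt (1+t^2) * Real.sqrt (1+t^2) = 1 + t^2 := Real.mul_self_sqrt (by positivity)
  have hsne : Real.sqrt (1 + t^2) ≠ 0 := by positivity
  have h2πne : Real.sqrt (2 * π) ≠ 0 := by positivity
  have hred : (Real.sqrt (1 + t ^ 2))⁻¹ * (1 + t ^ 2) = Real.sqrt (1 + t ^ 2) := by
    nth_rewrite 2 [← h2]
    field_simp
  have hfinal : ((Real.sqrt (2 * π))⁻¹ * (Real.sqrt (1 + t ^ 2))⁻¹ * Real.exp (-(u ^ 2 / (2 * (1 + t ^ 2))))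
        + t ^ 2 * ((Real.sqrt (2 * π))⁻¹ * (Real.sqrt (1 + t ^ 2))⁻¹
            * Real.exp (-(u ^ 2 / (2 * (1 + t ^ 2))))))
      = Real.sqrt (1 + t ^ 2) * Real.exp (-(u ^ 2 / (2 * (1 + t ^ 2)))) / Real.sqrt (2 * π) := by
    rw [show ((Real.sqrt (2 * π))⁻¹ * (Real.sqrt (1 + t ^ 2))⁻¹ * Real.exp (-(u ^ 2 / (2 * (1 + t ^ 2))))
        + t ^ 2 * ((Real.sqrt (2 * π))⁻¹ * (Real.sqrt (1 + t ^ 2))⁻¹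
            * Real.exp (-(u ^ 2 / (2 * (1 + t ^ 2))))))
      = ((Real.sqrt (1 + t ^ 2))⁻¹ * (1 + t ^ 2))
          * ((Real.sqrt (2 * π))⁻¹ * Real.exp (-(u ^ 2 / (2 * (1 + t ^ 2))))) from by ring, hred]
    rw [div_eq_mul_inv]
    ring
  rw [show u * Real.sqrt (2 * π) = Real.sqrt (2 * π) * u from mul_comm _ _, ← div_div,
    ← hfinal, le_div_iff₀ hu]
  linarith

lemma bad_bound (t u : ℝ) (ht : 0 ≤ t) (hu : 0 < u) :
    ((Measure.prod γ γ) {p : ℝ × ℝ | p.1 - t * |p.2| < -u}).toReal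
      ≤ 2 * ((1 + t) * Real.exp (-(u ^ 2 / (2 * (1 + t) ^ 2))) / (u * Real.sqrt (2 * π))) := by
  have hπ := Real.pi_pos
  set H1 : Set (ℝ × ℝ) := {p : ℝ × ℝ | p.1 - t * p.2 < -u} with hH1
  set H2 : Set (ℝ × ℝ) := {p : ℝ × ℝ | p.1 + t * p.2 < -u} with hH2
  have hH1meas : MeasurableSet H1 :=
    measurableSet_lt (measurable_fst.sub (measurable_snd.const_mul t)) measurable_const
  have hsub : {p : ℝ × ℝ | p.1 - t * |p.2| < -u} ⊆ H1 ∪ H2 := by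
    intro p hp
    simp only [Set.mem_setOf_eq] at hp
    rcases abs_cases p.2 with ⟨habs, _⟩ | ⟨habs, _⟩
    · left; simp only [hH1, Set.mem_setOf_eq]; rw [habs] at hp; linarith
    · right; simp only [hH2, Set.mem_setOf_eq]; rw [habs] at hp; linarith
  have hγneg : Measure.map (fun y : ℝ => -y) γ = γ := by
    have h := gaussianReal_map_const_mul (μ := 0) (v := 1) (-1)
    have heq : (fun y : ℝ => -y) = ((-1 : ℝ) * ·) := by funext y; ring
    rw [heq, h]
    norm_num
  have hmapT : (Measure.prod γ γ).map (fun p : ℝ × ℝ => (p.1, -p.2)) = Measure.prod γ γ := by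
    have h := Measure.map_prod_map (f := fun x : ℝ => x) (g := fun y : ℝ => -y) γ γ
      measurable_id measurable_neg
    have heq : (Prod.map (fun x : ℝ => x) (fun y : ℝ => -y)) = fun p : ℝ × ℝ => (p.1, -p.2) := by
      funext p; rfl
    rw [heq] at h
    rw [← h, Measure.map_id', hγneg]
  have hH2eq : (Measure.prod γ γ) H2 = (Measure.prod γ γ) H1 := by
    have hpre : (fun p : ℝ × ℝ => (p.1, -p.2)) ⁻¹' H1 = H2 := by
      ext p
      simp only [hH1, hH2, Set.mem_preimage, Set.mem_setOf_eq]
      constructor <;> intro h <;> linarith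
    rw [← hpre, ← Measure.map_apply (f := fun p : ℝ × ℝ => (p.1, -p.2)) (measurable_fst.prodMk measurable_snd.neg) hH1meas, hmapT]
  have hmono : ((Measure.prod γ γ) {p : ℝ × ℝ | p.1 - t * |p.2| < -u}).toReal
      ≤ ((Measure.prod γ γ) H1).toReal + ((Measure.prod γ γ) H1).toReal := by
    rw [← ENNReal.toReal_add (measure_ne_top _ _) (measure_ne_top _ _)]
    apply ENNReal.toReal_mono (by finiteness)
    calc (Measure.prod γ γ) {p : ℝ × ℝ | p.1 - t * |p.2| < -u}
        ≤ (Measure.prod γ γ) (H1 ∪ H2) := measure_mono hsub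
      _ ≤ (Measure.prod γ γ) H1 + (Measure.prod γ γ) H2 := measure_union_le _ _
      _ = (Measure.prod γ γ) H1 + (Measure.prod γ γ) H1 := by rw [hH2eq]
  have hb1 := halfplane_bound t u ht hu
  have hsqle : Real.sqrt (1 + t^2) ≤ 1 + t := by
    rw [show (1:ℝ) + t = Real.sqrt ((1+t)^2) from (Real.sqrt_sq (by linarith)).symm]
    apply Real.sqrt_le_sqrt
    nlinarith
  have hexple : Real.exp (-(u^2/(2*(1+t^2)))) ≤ Real.exp (-(u^2/(2*(1+t)^2))) := by
    apply Real.exp_le_exp.mpr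
    have hdd : u^2/(2*(1+t)^2) ≤ u^2/(2*(1+t^2)) := by
      apply div_le_div_of_nonneg_left (sq_nonneg u) (by positivity) (by nlinarith)
    linarith
  have hnum : Real.sqrt (1 + t^2) * Real.exp (-(u^2/(2*(1+t^2))))
      ≤ (1 + t) * Real.exp (-(u^2/(2*(1+t)^2))) :=
    mul_le_mul hsqle hexple (Real.exp_nonneg _) (by linarith)
  have hbb : ((Measure.prod γ γ) H1).toReal
      ≤ (1 + t) * Real.exp (-(u ^ 2 / (2 * (1 + t) ^ 2))) / (u * Real.sqrt (2 * π)) := by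
    refine hb1.trans ?_
    exact div_le_div_of_nonneg_right hnum (by positivity)
  linarith

end Halfplane


lemma re_mul_conj (x y : ℝ) (c : ℂ) :
    (((x : ℂ) + (y : ℂ) * Complex.I) * (starRingEnd ℂ) c).re = x * c.re + y * c.im := by
  simp [Complex.mul_re, Complex.add_re, Complex.add_im, Complex.mul_im]
  try ring

end Aux

set_option maxHeartbeats 2000000 in
/-- **Lower bound on `E_{K,M}(ν)` valid for all `ν > 0`** (K ≥ 4 a multiple of 4, M ≥ 2):
`E_{K,M}(ν) ≥ −2(1+cot(2π/K))·(KM)^{−ν/(2(1+cot(2π/K))²)}/√(2πν ln(KM))`. -/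
theorem EKM_lower_bound_all_nu (K M : ℕ) (hK : 4 ≤ K) (hK4 : 4 ∣ K) (hM : 2 ≤ M)
    (ν : ℝ) (hν : 0 < ν) :
    -(2 * (1 + Real.cot (2 * Real.pi / K)) *
        ((K : ℝ) * M) ^ (-(ν / (2 * (1 + Real.cot (2 * Real.pi / K)) ^ 2))) /
        Real.sqrt (2 * Real.pi * ν * Real.log ((K : ℝ) * M)))
      ≤ EKM K M ν := by
  obtain ⟨m, rfl⟩ := hK4
  have hm : 0 < m := by omega
  have hπ := Real.pi_pos
  have hKcast : ((4 * m : ℕ) : ℝ) = 4 * (m : ℝ) := by push_cast; ring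
  have hmR1 : (1 : ℝ) ≤ (m : ℝ) := by exact_mod_cast hm
  have hMR : (2 : ℝ) ≤ (M : ℝ) := by exact_mod_cast hM
  have hKMgt : (1 : ℝ) < ((4 * m : ℕ) : ℝ) * (M : ℝ) := by rw [hKcast]; nlinarith
  have hlog : 0 < Real.log (((4 * m : ℕ) : ℝ) * (M : ℝ)) := Real.log_pos hKMgt
  have hμpos : 0 < ν * Real.log (((4 * m : ℕ) : ℝ) * (M : ℝ)) := mul_pos hν hlog
  set μv : ℝ := ν * Real.log (((4 * m : ℕ) : ℝ) * (M : ℝ)) with hμv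
  set u : ℝ := Real.sqrt μv with hudef
  have hu : 0 < u := Real.sqrt_pos.mpr hμpos
  have huu : μv = u * u := (Real.mul_self_sqrt hμpos.le).symm
  set t : ℝ := Real.cot (2 * Real.pi / ((4 * m : ℕ) : ℝ)) with htdef
  have htcot : t = Real.cot (2 * Real.pi / (4 * (m : ℝ))) := by rw [htdef, hKcast]
  have hang0 : 2 * Real.pi / (4 * (m : ℝ)) = Real.pi / (2 * (m : ℝ)) := by
    field_simp; ring
  have hsa : 0 < Real.sin (Real.pi / (2 * (m : ℝ))) := by
    apply Real.sin_pos_of_pos_of_lt_pi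
    · positivity
    · rw [div_lt_iff₀ (by positivity)]
      nlinarith [hmR1]
  have hca : 0 ≤ Real.cos (Real.pi / (2 * (m : ℝ))) := by
    apply Real.cos_nonneg_of_mem_Icc
    constructor
    · nlinarith [div_nonneg hπ.le (by positivity : (0:ℝ) ≤ 2 * (m:ℝ))]
    · rw [div_le_div_iff₀ (by positivity) (by norm_num)]
      nlinarith [hmR1]
  have ht0 : 0 ≤ t := by
    rw [htcot, hang0, Real.cot_eq_cos_div_sin]
    positivity
  set n := M - 1 with hn
  set fR : (ℝ × ℝ) × ((Fin n → ℝ) × (Fin n → ℝ)) → ℝ := fun ω =>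
    (∑ k ∈ Finset.Icc 1 (4 * m), (psk (4 * m) k).re *
        Real.exp (μv * (psk (4 * m) k).re +
          u * (ω.1.1 * (psk (4 * m) k).re + ω.1.2 * (psk (4 * m) k).im))) /
    ((∑ a ∈ Finset.Icc 1 (4 * m), Real.exp (μv * (psk (4 * m) a).re +
          u * (ω.1.1 * (psk (4 * m) a).re + ω.1.2 * (psk (4 * m) a).im))) +
      ∑ j : Fin n, ∑ b ∈ Finset.Icc 1 (4 * m), Real.exp
          (u * (ω.2.1 j * (psk (4 * m) b).re + ω.2.2 j * (psk (4 * m) b).im)))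
    with hfR
  have hEKM : EKM (4 * m) M ν = ∫ ω, fR ω ∂(seMeasure M) := by
    rw [EKM]
    apply integral_congr_ae
    filter_upwards with ω
    simp only [hfR, re_mul_conj, ← hμv, ← hudef]
    rfl
  set Bad2 : Set (ℝ × ℝ) := {p : ℝ × ℝ | p.1 - t * |p.2| < -u} with hBad2
  have hBad2meas : MeasurableSet Bad2 :=
    measurableSet_lt (measurable_fst.sub (measurable_snd.abs.const_mul t)) measurable_const
  set Bad : Set ((ℝ × ℝ) × ((Fin n → ℝ) × (Fin n → ℝ))) := Prod.fst ⁻¹' Bad2 with hBadDef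
  have hBadmeas : MeasurableSet Bad := measurable_fst hBad2meas
  haveI hPP : IsProbabilityMeasure (seMeasure M) := by unfold seMeasure; infer_instance
  have hDpos : ∀ ω : (ℝ × ℝ) × ((Fin n → ℝ) × (Fin n → ℝ)),
      0 < (∑ a ∈ Finset.Icc 1 (4 * m), Real.exp (μv * (psk (4 * m) a).re +
          u * (ω.1.1 * (psk (4 * m) a).re + ω.1.2 * (psk (4 * m) a).im))) +
        ∑ j : Fin n, ∑ b ∈ Finset.Icc 1 (4 * m), Real.exp
          (u * (ω.2.1 j * (psk (4 * m) b).re + ω.2.2 j * (psk (4 * m) b).im)) := by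
    intro ω
    apply add_pos_of_pos_of_nonneg
    · apply Finset.sum_pos (fun i _ => Real.exp_pos _)
      exact ⟨1, Finset.mem_Icc.mpr (by omega)⟩
    · exact Finset.sum_nonneg fun j _ => Finset.sum_nonneg fun b _ => (Real.exp_pos _).le
  have hNabs : ∀ ω : (ℝ × ℝ) × ((Fin n → ℝ) × (Fin n → ℝ)),
      |∑ k ∈ Finset.Icc 1 (4 * m), (psk (4 * m) k).re *
        Real.exp (μv * (psk (4 * m) k).re +
          u * (ω.1.1 * (psk (4 * m) k).re + ω.1.2 * (psk (4 * m) k).im))|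
      ≤ ∑ a ∈ Finset.Icc 1 (4 * m), Real.exp (μv * (psk (4 * m) a).re +
          u * (ω.1.1 * (psk (4 * m) a).re + ω.1.2 * (psk (4 * m) a).im)) := by
    intro ω
    refine (Finset.abs_sum_le_sum_abs _ _).trans ?_
    apply Finset.sum_le_sum
    intro k _
    rw [abs_mul, Real.abs_exp]
    have h1 : |(psk (4 * m) k).re| ≤ 1 := by
      have h2 := Complex.abs_re_le_norm (psk (4 * m) k)
      rw [psk_abs] at h2
      exact h2
    nlinarith [Real.exp_pos (μv * (psk (4 * m) k).re +
      u * (ω.1.1 * (psk (4 * m) k).re + ω.1.2 * (psk (4 * m) k).im)), h1,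
      abs_nonneg ((psk (4 * m) k).re)]
  have hfRabs : ∀ ω, |fR ω| ≤ 1 := by
    intro ω
    simp only [hfR]
    rw [abs_div, abs_of_pos (hDpos ω)]
    apply div_le_one_of_le₀
    · refine (hNabs ω).trans (le_add_of_nonneg_right ?_)
      exact Finset.sum_nonneg fun j _ => Finset.sum_nonneg fun b _ => (Real.exp_pos _).le
    · exact (hDpos ω).le
  have hkey : ∀ ω, -(Set.indicator Bad (fun _ => (1:ℝ)) ω) ≤ fR ω := by
    intro ω
    by_cases hmem : ω ∈ Bad
    · rw [Set.indicator_of_mem hmem]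
      have h := abs_le.mp (hfRabs ω)
      linarith [h.1]
    · rw [Set.indicator_of_notMem hmem, neg_zero]
      simp only [hfR]
      apply div_nonneg _ (hDpos ω).le
      apply numer_nonneg m hm μv u ω.1.1 ω.1.2 huu hu.le
      have hnot : ¬ (ω.1.1 - t * |ω.1.2| < -u) := hmem
      rw [not_lt] at hnot
      rw [← htcot]
      exact hnot
  have hfRmeas : Measurable fR := by
    have hx : Measurable fun ω : (ℝ × ℝ) × ((Fin n → ℝ) × (Fin n → ℝ)) => ω.1.1 :=
      measurable_fst.fst
    have hy : Measurable fun ω : (ℝ × ℝ) × ((Fin n → ℝ) × (Fin n → ℝ)) => ω.1.2 :=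
      measurable_fst.snd
    have hw1 : ∀ j : Fin n, Measurable fun ω : (ℝ × ℝ) × ((Fin n → ℝ) × (Fin n → ℝ)) =>
        ω.2.1 j := fun j => (measurable_pi_apply j).comp measurable_snd.fst
    have hw2 : ∀ j : Fin n, Measurable fun ω : (ℝ × ℝ) × ((Fin n → ℝ) × (Fin n → ℝ)) =>
        ω.2.2 j := fun j => (measurable_pi_apply j).comp measurable_snd.snd
    simp only [hfR]
    refine Measurable.div ?_ ?_
    · refine Finset.measurable_sum _ fun k _ => ?_
      exact ((((hx.mul_const _).add (hy.mul_const _)).const_mul u).const_add _).exp.const_mul _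
    · refine Measurable.add ?_ ?_
      · refine Finset.measurable_sum _ fun k _ => ?_
        exact ((((hx.mul_const _).add (hy.mul_const _)).const_mul u).const_add _).exp
      · refine Finset.measurable_sum _ fun j _ => ?_
        refine Finset.measurable_sum _ fun b _ => ?_
        exact ((((hw1 j).mul_const _).add ((hw2 j).mul_const _)).const_mul u).exp
  have hfRint : Integrable fR (seMeasure M) := by
    refine Integrable.mono' (integrable_const (1:ℝ)) hfRmeas.aestronglyMeasurable ?_
    exact Filter.Eventually.of_forall fun ω => by rw [Real.norm_eq_abs]; exact hfRabs ω
  have hIndint : Integrable (fun ω => -(Set.indicator Bad (fun _ => (1:ℝ)) ω)) (seMeasure M) :=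
    ((integrable_const (1:ℝ)).indicator hBadmeas).neg
  have hmono := integral_mono hIndint hfRint hkey
  have hIndval : (∫ ω, -(Set.indicator Bad (fun _ => (1:ℝ)) ω) ∂(seMeasure M))
      = -((((gaussianReal 0 1).prod (gaussianReal 0 1)) Bad2).toReal) := by
    rw [integral_neg, integral_indicator_const (1:ℝ) hBadmeas, smul_eq_mul, mul_one]
    congr 1
    have hprodset : Bad = Bad2 ×ˢ (Set.univ : Set ((Fin n → ℝ) × (Fin n → ℝ))) := by
      rw [hBadDef, Set.prod_univ]
    rw [hprodset]
    unfold seMeasure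
    rw [measureReal_def, Measure.prod_prod, measure_univ, mul_one]
  have hbb := bad_bound t u ht0 hu
  rw [← hBad2] at hbb
  have h1 : u ^ 2 = μv := Real.sq_sqrt hμpos.le
  have h2 : (((4 * m : ℕ) : ℝ) * M) ^ (-(ν / (2 * (1 + t) ^ 2)))
      = Real.exp (-(u ^ 2 / (2 * (1 + t) ^ 2))) := by
    rw [Real.rpow_def_of_pos (by linarith : (0:ℝ) < ((4 * m : ℕ) : ℝ) * M)]
    congr 1
    rw [h1, hμv]
    ring
  have h3 : Real.sqrt (2 * Real.pi * ν * Real.log (((4 * m : ℕ) : ℝ) * M))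
      = u * Real.sqrt (2 * Real.pi) := by
    have e1 : 2 * Real.pi * ν * Real.log (((4 * m : ℕ) : ℝ) * M) = (2 * Real.pi) * μv := by
      rw [hμv]; ring
    rw [e1, Real.sqrt_mul (by positivity : (0:ℝ) ≤ 2 * Real.pi) μv, mul_comm, hudef]
  rw [hEKM]
  calc -(2 * (1 + t) * ((((4 * m : ℕ) : ℝ) * M) ^ (-(ν / (2 * (1 + t) ^ 2)))) /
        Real.sqrt (2 * Real.pi * ν * Real.log (((4 * m : ℕ) : ℝ) * M)))
      = -(2 * ((1 + t) * Real.exp (-(u ^ 2 / (2 * (1 + t) ^ 2))) /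
          (u * Real.sqrt (2 * Real.pi)))) := by
        rw [h2, h3]; ring
    _ ≤ -((((gaussianReal 0 1).prod (gaussianReal 0 1)) Bad2).toReal) := by linarith
    _ = ∫ ω, -(Set.indicator Bad (fun _ => (1:ℝ)) ω) ∂(seMeasure M) := hIndval.symm
    _ ≤ ∫ ω, fR ω ∂(seMeasure M) := hmono
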